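/- Let f : I → ℝ be a positive smooth solution of f'(u)² = f(u)²(c² + (c²−1)f(u)²) with f' nowhere zero, where c > 0. Then on I, f(u) = 2c e^{±cu+d}/(1−c²+e^{2(±cu+d)}) for some constant d, for one fixed choice of sign. -/

import Mathlib

open Real

/-- A positive solution of f'² = f²(c² + (c²−1)f²) with f' nowhere zero on an interval
is f(u) = 2c e^{±cu+d}/(1−c²+e^{2(±cu+d)}) for some constant d and a fixed sign. -/
theorem ode_solution_f
    (c : ℝ) (hc : 0 < c) (a b : ℝ) (hab : a < b)
    (f f' : ℝ → ℝ)
    (hder : ∀ u ∈ Set.Ioo a b, HasDerivAt f (f' u) u)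
    (hcont : ContinuousOn f' (Set.Ioo a b))
    (hpos : ∀ u ∈ Set.Ioo a b, 0 < f u)
    (hode : ∀ u ∈ Set.Ioo a b, (f' u)^2 = (f u)^2 * (c^2 + (c^2 - 1) * (f u)^2))
    (hne : ∀ u ∈ Set.Ioo a b, f' u ≠ 0)
    (hrad : ∀ u ∈ Set.Ioo a b, 0 < c^2 + (c^2 - 1) * (f u)^2) :
    ∃ ε : ℝ, (ε = 1 ∨ ε = -1) ∧ ∃ d : ℝ, ∀ u ∈ Set.Ioo a b,
      f u = 2 * c * exp (ε * c * u + d) / (1 - c^2 + exp (2 * (ε * c * u + d))) := by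
  set I := Set.Ioo a b with hI
  set s : ℝ → ℝ := fun u => Real.sqrt (c^2 + (c^2-1) * (f u)^2) with hs_def
  have hs2 : ∀ u ∈ I, (s u)^2 = c^2 + (c^2-1)*(f u)^2 := fun u hu => Real.sq_sqrt (hrad u hu).le
  have hspos : ∀ u ∈ I, 0 < s u := fun u hu => Real.sqrt_pos.mpr (hrad u hu)
  have hfcont : ContinuousOn f I := fun u hu => ((hder u hu).continuousAt).continuousWithinAt
  have hscont : ContinuousOn s I :=
    (continuousOn_const.add (continuousOn_const.mul (hfcont.pow 2))).sqrt
  set q : ℝ → ℝ := fun u => f' u / (f u * s u) with hq_def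
  have hden : ∀ u ∈ I, f u * s u ≠ 0 := fun u hu => (mul_pos (hpos u hu) (hspos u hu)).ne'
  have hq2 : ∀ u ∈ I, (q u)^2 = 1 := by
    intro u hu
    have h : (f u * s u)^2 = (f' u)^2 := by rw [mul_pow, hs2 u hu, ← hode u hu]
    simp only [hq_def, div_pow, ← h]
    exact div_self (pow_ne_zero 2 (hden u hu))
  have hqcont : ContinuousOn q I := hcont.div (hfcont.mul hscont) hden
  have hu₀ : (a+b)/2 ∈ I := ⟨by linarith, by linarith⟩
  set u₀ := (a+b)/2 with hu₀_def
  obtain ⟨σ, hσval⟩ : ∃ σ, q u₀ = σ := ⟨_, rfl⟩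
  have hσ2 : σ^2 = 1 := hσval ▸ hq2 u₀ hu₀
  have hqconst : ∀ u ∈ I, q u = σ := by
    intro u hu
    by_contra hne'
    have h1 := sq_eq_one_iff.mp (hq2 u hu)
    have h2 := sq_eq_one_iff.mp hσ2
    have hsub : Set.uIcc u u₀ ⊆ I := (Set.ordConnected_Ioo).uIcc_subset hu hu₀
    have hq0 : q u₀ = σ := hσval
    have hzero : (0:ℝ) ∈ Set.uIcc (q u) (q u₀) := by
      rw [hq0]
      rcases h1 with h1 | h1 <;> rcases h2 with h2 | h2 <;>
        first
          | exact absurd (h1.trans h2.symm) hne'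
          | (rw [h1, h2, Set.mem_uIcc]; norm_num)
    obtain ⟨w, hw, hw0⟩ := intermediate_value_uIcc (hqcont.mono hsub) hzero
    have := hq2 w (hsub hw)
    rw [hw0] at this; norm_num at this
  have hf'eq : ∀ u ∈ I, f' u = σ * (f u * s u) := by
    intro u hu
    have h := hqconst u hu
    rw [hq_def] at h
    field_simp [hden u hu] at h
    rw [div_eq_iff (hden u hu)] at h
    linarith [h]
  have hsder : ∀ u ∈ I, HasDerivAt s ((c^2-1)*(2*f u*f' u) / (2 * s u)) u := by
    intro u hu
    have h1 : HasDerivAt (fun y => c^2 + (c^2-1) * (f y)^2) ((c^2-1)*(2*f u*f' u)) u := by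
      have h2 := ((hder u hu).pow 2).const_mul (c^2-1)
      have h3 := h2.const_add (c^2)
      refine h3.congr_deriv ?_
      push_cast; ring
    exact h1.sqrt (hrad u hu).ne'
  set h : ℝ → ℝ := fun u => Real.log (c + s u) - Real.log (f u) + σ*c*u with hh_def
  have hh0 : ∀ u ∈ I, HasDerivAt h 0 u := by
    intro u hu
    have hcs : 0 < c + s u := by have := hspos u hu; linarith
    have h1 : HasDerivAt (fun y => c + s y) ((c^2-1)*(2*f u*f' u) / (2 * s u)) u :=
      (hsder u hu).const_add c
    have h2 := h1.log hcs.ne'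
    have h3 := (hder u hu).log (hpos u hu).ne'
    have h4 : HasDerivAt (fun y => σ*c*y) (σ*c) u := by
      simpa using (hasDerivAt_id u).const_mul (σ*c)
    have h5 := (h2.sub h3).add h4
    refine h5.congr_deriv ?_
    have hf' := hf'eq u hu
    have hs2u := hs2 u hu
    have hfne := (hpos u hu).ne'
    have hsne := (hspos u hu).ne'
    rw [hf']
    have hcsne := hcs.ne'
    field_simp
    linear_combination (-σ) * hs2 u hu
  have hconst : ∀ u ∈ I, h u = h u₀ := by
    intro u hu
    apply (convex_Ioo a b).is_const_of_fderivWithin_eq_zero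
      (fun w hw => ((hh0 w hw).differentiableAt).differentiableWithinAt) ?_ hu hu₀
    intro w hw
    rw [fderivWithin_of_isOpen isOpen_Ioo hw, ((hh0 w hw).hasFDerivAt).fderiv]
    ext
    simp
  refine ⟨-σ, ?_, h u₀, ?_⟩
  · rcases sq_eq_one_iff.mp hσ2 with h1 | h1 <;> [right; left] <;> rw [h1] <;> norm_num
  intro u hu
  have hthis : Real.log (c + s u) - Real.log (f u) + σ*c*u = h u₀ := hconst u hu
  have hkey : Real.log (c + s u) - Real.log (f u) = (-σ) * c * u + h u₀ := by
    linear_combination hthis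
  have hcs : 0 < c + s u := by have := hspos u hu; linarith
  have hfpos := hpos u hu
  set E := Real.exp ((-σ) * c * u + h u₀) with hE_def
  have hEpos : 0 < E := Real.exp_pos _
  have hE : (c + s u) / f u = E := by
    rw [hE_def, ← hkey, Real.exp_sub, Real.exp_log hcs, Real.exp_log hfpos]
  have hEf : E * f u = c + s u := by
    field_simp [hfpos.ne'] at hE
    linarith [hE]
  have h6 : (1 - c^2 + E^2) * f u * f u = 2*c*E * f u := by
    linear_combination (E * f u + c + s u - 2*c) * hEf + hs2 u hu
  have hmain : (1 - c^2 + E^2) * f u = 2*c*E := mul_right_cancel₀ hfpos.ne' h6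
  have hdenpos : 0 < 1 - c^2 + E^2 := by
    nlinarith [hmain, mul_pos hc hEpos, hfpos]
  have hexp2 : Real.exp (2 * ((-σ) * c * u + h u₀)) = E^2 := by
    rw [two_mul, Real.exp_add, hE_def, sq]
  rw [hexp2]
  field_simp [hdenpos.ne']
  linear_combination hmain
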